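/- Let (X,d) be a compact metric space and f_{0,∞} = {f_n}_{n=0}^∞ a sequence of continuous self-maps of X. If (X, f_{0,∞}) is Li-Yorke chaotic, then so is the induced system (𝓜(X), f̂_{0,∞}); likewise, if (X, f_{0,∞}) is distributionally chaotic, then so is (𝓜(X), f̂_{0,∞}). -/

import Mathlib

open MeasureTheory Filter

/-- `nacomp f n = f_{n-1} ∘ ⋯ ∘ f_0` (with `nacomp f 0 = id`): the time-`n` map of the
non-autonomous system `(X, f_{0,∞})`. -/
def nacomp {Y : Type*} (f : ℕ → Y → Y) : ℕ → Y → Y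
  | 0 => id
  | n + 1 => f n ∘ nacomp f n

/-- The induced pushforward map `f̂` on the space `𝓜(X)` of Borel probability measures,
equipped with the Lévy–Prokhorov metric. -/
noncomputable def inducedMap {X : Type*} [MetricSpace X] [MeasurableSpace X] [BorelSpace X]
    (f : X → X) (hf : Continuous f) :
    LevyProkhorov (ProbabilityMeasure X) → LevyProkhorov (ProbabilityMeasure X) :=
  fun μ => (LevyProkhorov.toMeasureEquiv (α := ProbabilityMeasure X)).symm
    (((LevyProkhorov.toMeasureEquiv (α := ProbabilityMeasure X)) μ).map hf.measurable.aemeasurable)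

/-- Li–Yorke chaos of the non-autonomous system given by the maps `f n`: there is an
uncountable scrambled set. -/
def NALiYorkeChaotic {Y : Type*} [PseudoMetricSpace Y] (f : ℕ → Y → Y) : Prop :=
  ∃ S : Set Y, ¬ S.Countable ∧ ∀ x ∈ S, ∀ y ∈ S, x ≠ y →
    Filter.atTop.liminf (fun n : ℕ => dist (nacomp f n x) (nacomp f n y)) = 0 ∧
    0 < Filter.atTop.limsup (fun n : ℕ => dist (nacomp f n x) (nacomp f n y))

/-- Distributional chaos of the non-autonomous system given by the maps `f n`: there is an
uncountable distributionally scrambled set. -/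
def NADistributionallyChaotic {Y : Type*} [PseudoMetricSpace Y] (f : ℕ → Y → Y) : Prop :=
  ∃ D : Set Y, ¬ D.Countable ∧ ∀ x ∈ D, ∀ y ∈ D, x ≠ y →
    (∀ ε : ℝ, 0 < ε → Filter.atTop.limsup (fun n : ℕ =>
      (({i : ℕ | 1 ≤ i ∧ i ≤ n ∧ dist (nacomp f i x) (nacomp f i y) < ε}).ncard : ℝ) / n) = 1) ∧
    (∃ δ : ℝ, 0 < δ ∧ Filter.atTop.liminf (fun n : ℕ =>
      (({i : ℕ | 1 ≤ i ∧ i ≤ n ∧ dist (nacomp f i x) (nacomp f i y) < δ}).ncard : ℝ) / n) = 0)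

section DiracAux

open Metric Set ENNReal

variable {X : Type*} [MetricSpace X] [MeasurableSpace X] [BorelSpace X]

/-- The Dirac mass at `x`, as a point of the Lévy–Prokhorov space of probability measures. -/
noncomputable def diracLP (x : X) : LevyProkhorov (ProbabilityMeasure X) :=
  (LevyProkhorov.toMeasureEquiv (α := ProbabilityMeasure X)).symm ⟨Measure.dirac x, inferInstance⟩

lemma diracLP_dist_eq (x y : X) :
    dist (diracLP x) (diracLP y) = levyProkhorovDist (Measure.dirac x) (Measure.dirac y) := rfl

lemma diracLP_dist_le (x y : X) : dist (diracLP x) (diracLP y) ≤ dist x y := by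
  rw [diracLP_dist_eq]
  have key : ∀ a b : X, ∀ ε : ℝ≥0∞, edist a b < ε → ε < ∞ → ∀ B : Set X, MeasurableSet B →
      Measure.dirac a B ≤ Measure.dirac b (thickening ε.toReal B) + ε := by
    intro a b ε hab hεtop B hB
    by_cases ha : a ∈ B
    · have hb : b ∈ thickening ε.toReal B := by
        rw [mem_thickening_iff_infEdist_lt, ENNReal.ofReal_toReal hεtop.ne]
        exact lt_of_le_of_lt (EMetric.infEdist_le_edist_of_mem ha) (by rwa [edist_comm])
      calc Measure.dirac a B ≤ 1 := by
            simpa using measure_mono (μ := Measure.dirac a) (Set.subset_univ B)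
        _ ≤ Measure.dirac b (thickening ε.toReal B) + ε := by
            rw [Measure.dirac_apply_of_mem hb]; exact le_self_add
    · rw [Measure.dirac_apply' a hB, Set.indicator_of_notMem ha]
      exact zero_le
  have h : levyProkhorovEDist (Measure.dirac x) (Measure.dirac y) ≤ edist x y := by
    apply levyProkhorovEDist_le_of_forall
    intro ε B hε hεtop hB
    exact ⟨key x y ε hε hεtop B hB, key y x ε (by rwa [edist_comm]) hεtop B hB⟩
  calc levyProkhorovDist (Measure.dirac x) (Measure.dirac y)
      ≤ (edist x y).toReal := ENNReal.toReal_mono (edist_ne_top x y) h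
    _ = dist x y := (dist_edist x y).symm

lemma min_le_diracLP_dist (x y : X) : min (dist x y) 1 ≤ dist (diracLP x) (diracLP y) := by
  rw [diracLP_dist_eq]
  have key : ∀ c : ℝ≥0∞, c < 1 → c < edist x y →
      ¬ levyProkhorovEDist (Measure.dirac x) (Measure.dirac y) < c := by
    intro c hc1 hcd hlt
    have h := left_measure_le_of_levyProkhorovEDist_lt hlt
      (B := {x}) (measurableSet_singleton x)
    have hy : y ∉ thickening c.toReal ({x} : Set X) := by
      rw [mem_thickening_iff_infEdist_lt, ENNReal.ofReal_toReal (hc1.trans one_lt_top).ne]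
      simp only [EMetric.infEdist_singleton, not_lt]
      rw [edist_comm]; exact hcd.le
    rw [Measure.dirac_apply_of_mem (Set.mem_singleton x),
      Measure.dirac_apply' _ isOpen_thickening.measurableSet,
      Set.indicator_of_notMem hy, zero_add] at h
    exact absurd (h.trans_lt hc1) (lt_irrefl _)
  have hmin : min (edist x y) 1 ≤ levyProkhorovEDist (Measure.dirac x) (Measure.dirac y) := by
    by_contra hcon
    push_neg at hcon
    obtain ⟨c, hc1, hc2⟩ := exists_between hcon
    exact key c (lt_of_lt_of_le hc2 (min_le_right _ _))
      (lt_of_lt_of_le hc2 (min_le_left _ _)) hc1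
  have := ENNReal.toReal_mono (levyProkhorovEDist_ne_top _ _) hmin
  rwa [ENNReal.toReal_min (edist_ne_top x y) one_ne_top, ENNReal.toReal_one,
    ← dist_edist] at this

lemma diracLP_dist_le_one (x y : X) : dist (diracLP x) (diracLP y) ≤ 1 := by
  rw [diracLP_dist_eq]
  have h := levyProkhorovEDist_le_max_measure_univ (Measure.dirac x) (Measure.dirac y)
  simp only [measure_univ, max_self] at h
  have := ENNReal.toReal_mono one_ne_top h
  rwa [ENNReal.toReal_one] at this

lemma diracLP_injective : Function.Injective (diracLP (X := X)) := by
  intro x y h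
  have h2 := min_le_diracLP_dist x y
  rw [h, dist_self] at h2
  rcases min_le_iff.mp h2 with h3 | h3
  · exact dist_le_zero.mp h3
  · linarith

lemma inducedMap_diracLP (g : X → X) (hg : Continuous g) (x : X) :
    inducedMap g hg (diracLP x) = diracLP (g x) := by
  simp only [inducedMap, diracLP]
  congr 1
  apply Subtype.ext
  show (ProbabilityMeasure.map _ _).toMeasure = Measure.dirac (g x)
  rw [ProbabilityMeasure.toMeasure_map]
  exact Measure.map_dirac' hg.measurable x

lemma nacomp_diracLP (f : ℕ → X → X) (hf : ∀ n, Continuous (f n)) (n : ℕ) (x : X) :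
    nacomp (fun n => inducedMap (f n) (hf n)) n (diracLP x) = diracLP (nacomp f n x) := by
  induction n with
  | zero => rfl
  | succ n ih =>
    show inducedMap (f n) (hf n) (nacomp (fun n => inducedMap (f n) (hf n)) n (diracLP x)) = _
    rw [ih, inducedMap_diracLP]
    rfl

end DiracAux

section FilterAux

lemma liminf_aux {u v : ℕ → ℝ} (hu0 : ∀ n, 0 ≤ u n) (hu1 : ∀ n, u n ≤ 1)
    (huv : ∀ n, u n ≤ v n) {C : ℝ} (hv1 : ∀ n, v n ≤ C) (hv : Filter.atTop.liminf v = 0) :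
    Filter.atTop.liminf u = 0 := by
  apply le_antisymm
  · have hle : ∀ ε : ℝ, 0 < ε → Filter.atTop.liminf u ≤ ε := by
      intro ε hε
      have hfreq : ∃ᶠ n in Filter.atTop, v n < ε :=
        frequently_lt_of_liminf_lt (Filter.isCoboundedUnder_ge_of_le _ hv1)
          (by rw [hv]; exact hε)
      exact liminf_le_of_frequently_le
        (hfreq.mono fun n hn => ((huv n).trans hn.le))
        (Filter.isBoundedUnder_of ⟨0, hu0⟩)
    have := le_of_forall_pos_le_add (a := Filter.atTop.liminf u) (b := 0)
      (fun ε hε => by simpa using hle ε hε)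
    exact this
  · exact Filter.le_liminf_of_le (Filter.isCoboundedUnder_ge_of_le _ hu1)
      (Filter.Eventually.of_forall hu0)

lemma limsup_aux {u v : ℕ → ℝ} (hu1 : ∀ n, u n ≤ 1) (hv0 : ∀ n, 0 ≤ v n)
    (hvu : ∀ n, v n ≤ u n) (hv : Filter.atTop.limsup v = 1) :
    Filter.atTop.limsup u = 1 := by
  apply le_antisymm
  · exact Filter.limsup_le_of_le
      (Filter.isCoboundedUnder_le_of_le _ (fun n => (hv0 n).trans (hvu n)))
      (Filter.Eventually.of_forall hu1)
  · rw [← hv]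
    exact Filter.limsup_le_limsup (Filter.Eventually.of_forall hvu)
      (Filter.isCoboundedUnder_le_of_le _ hv0) (Filter.isBoundedUnder_of ⟨1, hu1⟩)

lemma limsup_pos_aux {u v : ℕ → ℝ} (hu1 : ∀ n, u n ≤ 1) (hv0 : ∀ n, 0 ≤ v n)
    (huv : ∀ n, min (v n) 1 ≤ u n) (hv : 0 < Filter.atTop.limsup v) :
    0 < Filter.atTop.limsup u := by
  have hb : (0 : ℝ) < Filter.atTop.limsup v / 2 := half_pos hv
  have hb' : Filter.atTop.limsup v / 2 < Filter.atTop.limsup v := half_lt_self hv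
  have hfreq := Filter.frequently_lt_of_lt_limsup
    (Filter.isCoboundedUnder_le_of_le Filter.atTop hv0) hb'
  have hfreq2 : ∃ᶠ n in Filter.atTop, min (Filter.atTop.limsup v / 2) 1 ≤ u n :=
    hfreq.mono fun n hn => le_trans (min_le_min hn.le le_rfl) (huv n)
  have h := Filter.le_limsup_of_frequently_le hfreq2 (Filter.isBoundedUnder_of ⟨1, hu1⟩)
  exact lt_of_lt_of_le (lt_min hb one_pos) h

end FilterAux

section NcardAux

lemma seg_finite (P : ℕ → Prop) (n : ℕ) : {i : ℕ | 1 ≤ i ∧ i ≤ n ∧ P i}.Finite :=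
  (Set.finite_Icc 1 n).subset (fun i hi => ⟨hi.1, hi.2.1⟩)

lemma seg_ncard_le (P : ℕ → Prop) (n : ℕ) : {i : ℕ | 1 ≤ i ∧ i ≤ n ∧ P i}.ncard ≤ n := by
  have h := Set.ncard_le_ncard (fun i (hi : i ∈ {i : ℕ | 1 ≤ i ∧ i ≤ n ∧ P i}) =>
    (Set.mem_Icc.mpr ⟨hi.1, hi.2.1⟩)) (Set.finite_Icc 1 n)
  rwa [← Finset.coe_Icc, Set.ncard_coe_finset, Nat.card_Icc, Nat.add_sub_cancel] at h

lemma ratio_nonneg (P : ℕ → Prop) (n : ℕ) :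
    0 ≤ ({i : ℕ | 1 ≤ i ∧ i ≤ n ∧ P i}.ncard : ℝ) / n := by positivity

lemma ratio_le_one (P : ℕ → Prop) (n : ℕ) :
    ({i : ℕ | 1 ≤ i ∧ i ≤ n ∧ P i}.ncard : ℝ) / n ≤ 1 := by
  rcases Nat.eq_zero_or_pos n with h | h
  · simp [h]
  · rw [div_le_one (by exact_mod_cast h)]
    exact_mod_cast seg_ncard_le P n

lemma ratio_mono {P Q : ℕ → Prop} (h : ∀ i, P i → Q i) (n : ℕ) :
    ({i : ℕ | 1 ≤ i ∧ i ≤ n ∧ P i}.ncard : ℝ) / n ≤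
      ({i : ℕ | 1 ≤ i ∧ i ≤ n ∧ Q i}.ncard : ℝ) / n := by
  rcases Nat.eq_zero_or_pos n with h0 | h0
  · simp [h0]
  · have hsub : {i : ℕ | 1 ≤ i ∧ i ≤ n ∧ P i} ⊆ {i : ℕ | 1 ≤ i ∧ i ≤ n ∧ Q i} :=
      fun i hi => ⟨hi.1, hi.2.1, h i hi.2.2⟩
    have hc : ({i : ℕ | 1 ≤ i ∧ i ≤ n ∧ P i}.ncard : ℝ) ≤
        ({i : ℕ | 1 ≤ i ∧ i ≤ n ∧ Q i}.ncard : ℝ) := by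
      exact_mod_cast Set.ncard_le_ncard hsub (seg_finite Q n)
    exact div_le_div_of_nonneg_right hc (Nat.cast_nonneg n)

end NcardAux

/-- Li–Yorke chaos (resp. distributional chaos) of `(X, f_{0,∞})` carries over to the induced
system `(𝓜(X), f̂_{0,∞})`. -/
theorem induced_chaos_of_chaos
    {X : Type*} [MetricSpace X] [CompactSpace X] [MeasurableSpace X] [BorelSpace X]
    (f : ℕ → X → X) (hf : ∀ n, Continuous (f n)) :
    (NALiYorkeChaotic f → NALiYorkeChaotic (fun n => inducedMap (f n) (hf n))) ∧
    (NADistributionallyChaotic f →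
      NADistributionallyChaotic (fun n => inducedMap (f n) (hf n))) := by
  constructor
  · rintro ⟨S, hSc, hS⟩
    refine ⟨diracLP '' S, ?_, ?_⟩
    · intro hc
      exact hSc ((hc.preimage diracLP_injective).mono (Set.subset_preimage_image _ S))
    · rintro _ ⟨x, hx, rfl⟩ _ ⟨y, hy, rfl⟩ hxy
      have hxy' : x ≠ y := fun h => hxy (by rw [h])
      obtain ⟨h1, h2⟩ := hS x hx y hy hxy'
      obtain ⟨C, hC⟩ := Metric.isBounded_iff.mp (isCompact_univ (X := X)).isBounded
      constructor
      · simp only [nacomp_diracLP f hf]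
        exact liminf_aux (fun n => dist_nonneg) (fun n => diracLP_dist_le_one _ _)
          (fun n => diracLP_dist_le _ _)
          (fun n => hC (Set.mem_univ _) (Set.mem_univ _)) h1
      · simp only [nacomp_diracLP f hf]
        exact limsup_pos_aux (fun n => diracLP_dist_le_one _ _) (fun n => dist_nonneg)
          (fun n => min_le_diracLP_dist _ _) h2
  · rintro ⟨S, hSc, hS⟩
    refine ⟨diracLP '' S, ?_, ?_⟩
    · intro hc
      exact hSc ((hc.preimage diracLP_injective).mono (Set.subset_preimage_image _ S))
    · rintro _ ⟨x, hx, rfl⟩ _ ⟨y, hy, rfl⟩ hxy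
      have hxy' : x ≠ y := fun h => hxy (by rw [h])
      obtain ⟨h1, h2⟩ := hS x hx y hy hxy'
      constructor
      · intro ε hε
        simp only [nacomp_diracLP f hf]
        exact limsup_aux (fun n => ratio_le_one _ n) (fun n => ratio_nonneg _ n)
          (fun n => ratio_mono
            (fun i hi => lt_of_le_of_lt (diracLP_dist_le _ _) hi) n) (h1 ε hε)
      · obtain ⟨δ, hδ, hlim⟩ := h2
        refine ⟨min δ 1, lt_min hδ one_pos, ?_⟩
        simp only [nacomp_diracLP f hf]
        refine liminf_aux (fun n => ratio_nonneg _ n) (fun n => ratio_le_one _ n)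
          (fun n => ratio_mono (fun i hi => ?_) n) (fun n => ratio_le_one _ n) hlim
        have h3 := min_le_diracLP_dist (nacomp f i x) (nacomp f i y)
        have h4 : min (dist (nacomp f i x) (nacomp f i y)) 1 < min δ 1 :=
          lt_of_le_of_lt h3 hi
        rcases le_or_gt 1 (dist (nacomp f i x) (nacomp f i y)) with h5 | h5
        · exact absurd ((min_eq_right h5 ▸ h4).trans_le (min_le_right _ _)) (lt_irrefl _)
        · exact lt_of_lt_of_le (min_eq_left h5.le ▸ h4) (min_le_left _ _)
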